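/- Let q ≥ 2 and let B = ε₁ε₂⋯ε_ℓ be a block of ℓ base-q digits that is not the all-zero block 00⋯0. For a nonnegative integer n, let c_B(n) denote the number of occurrences of B as a block of consecutive digits in the base-q expansion of n, where the expansion is regarded as padded with infinitely many zeros on both the left and the right (this count is finite since B is not all zeros). Then c_B is q-quasiadditive with parameter ℓ: for all nonnegative integers a, b, k with b < q^k, one has c_B(q^(k+ℓ)·a + b) = c_B(a) + c_B(b). -/

import Mathlib

/-- The digit of `n` in base `q` at position `j ∈ ℤ`, where the base-`q` expansion of `n`
is regarded as padded with infinitely many zeros on both the left and the right. -/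
def digitZ (q n : ℕ) (j : ℤ) : ℕ :=
  if 0 ≤ j then n / q ^ j.toNat % q else 0

/-- The number of occurrences of the block `B = ε₁ε₂⋯ε_ℓ` (here `ε i` for `i : Fin ℓ`,
with `ε 0 = ε₁` the most significant digit of the block) as a block of consecutive digits
in the base-`q` expansion of `n`, regarded as padded with infinitely many zeros on both
ends: an occurrence at position `j ∈ ℤ` means that for each `i`, the digit at position
`j + (ℓ - 1 - i)` equals `ε i`. -/
noncomputable def blockCount (q ℓ : ℕ) (ε : Fin ℓ → ℕ) (n : ℕ) : ℕ :=
  Nat.card {j : ℤ // ∀ i : Fin ℓ, digitZ q n (j + ((ℓ - 1 - (i : ℕ) : ℕ) : ℤ)) = ε i}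

namespace BlockCountAux

lemma digitZ_ne_bound {q n : ℕ} {j : ℤ} (h : digitZ q n j ≠ 0) :
    0 ≤ j ∧ q ^ j.toNat ≤ n := by
  have h0 : 0 ≤ j := by
    by_contra h0
    exact h (by simp [digitZ, h0])
  refine ⟨h0, ?_⟩
  rw [digitZ, if_pos h0] at h
  by_contra hc
  push_neg at hc
  rw [Nat.div_eq_of_lt hc] at h
  simp at h

lemma occ_lt {q ℓ : ℕ} (hq : 2 ≤ q) {ε : Fin ℓ → ℕ} (hne : ∃ i, ε i ≠ 0)
    {n k : ℕ} (hn : n < q ^ k) {j : ℤ}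
    (hj : ∀ i : Fin ℓ, digitZ q n (j + ((ℓ - 1 - (i : ℕ) : ℕ) : ℤ)) = ε i) :
    j < k ∧ 1 - (ℓ : ℤ) ≤ j := by
  obtain ⟨i₀, hi₀⟩ := hne
  have hne' : digitZ q n (j + ((ℓ - 1 - (i₀ : ℕ) : ℕ) : ℤ)) ≠ 0 := by
    rw [hj i₀]; exact hi₀
  obtain ⟨h0, h1⟩ := digitZ_ne_bound hne'
  have ht : (j + ((ℓ - 1 - (i₀ : ℕ) : ℕ) : ℤ)).toNat < k := by
    by_contra hc
    push_neg at hc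
    exact absurd (le_trans (Nat.pow_le_pow_right (by omega) hc) h1) (not_le.mpr hn)
  have hi₀ℓ : ℓ - 1 - (i₀ : ℕ) < ℓ := by have := i₀.2; omega
  omega

lemma occ_finite {q ℓ : ℕ} (hq : 2 ≤ q) {ε : Fin ℓ → ℕ} (hne : ∃ i, ε i ≠ 0) (n : ℕ) :
    {j : ℤ | ∀ i : Fin ℓ, digitZ q n (j + ((ℓ - 1 - (i : ℕ) : ℕ) : ℤ)) = ε i}.Finite := by
  apply (Set.finite_Icc (1 - (ℓ : ℤ)) (n : ℤ)).subset
  intro j hj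
  have hn : n < q ^ (n + 1) := by
    calc n < 2 ^ (n + 1) := by
            have h1 := Nat.lt_two_pow_self (n := n)
            have h2 : (2 : ℕ) ^ n ≤ 2 ^ (n + 1) := Nat.pow_le_pow_right (by omega) (by omega)
            omega
      _ ≤ q ^ (n + 1) := Nat.pow_le_pow_left hq _
  obtain ⟨h1, h2⟩ := occ_lt hq hne hn hj
  simp only [Set.mem_Icc]
  omega

lemma low_digit {q k ℓ a b : ℕ} (hq : 2 ≤ q) (p : ℕ) (hp : p < k + ℓ) :
    (q ^ (k + ℓ) * a + b) / q ^ p % q = b / q ^ p % q := by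
  obtain ⟨d, hd⟩ : ∃ d, k + ℓ = p + d + 1 := ⟨k + ℓ - p - 1, by omega⟩
  have h1 : q ^ (k + ℓ) * a + b = q ^ p * (q * (q ^ d * a)) + b := by
    rw [hd]; ring
  rw [h1, Nat.mul_add_div (pow_pos (by omega : 0 < q) p), Nat.mul_add_mod]

lemma mid_b {q k b : ℕ} (hq : 2 ≤ q) (hb : b < q ^ k) (p : ℕ) (hp : k ≤ p) :
    b / q ^ p = 0 :=
  Nat.div_eq_of_lt (lt_of_lt_of_le hb (Nat.pow_le_pow_right (by omega) hp))

lemma high_digit {q k ℓ a b : ℕ} (hq : 2 ≤ q) (hb : b < q ^ k) (p : ℕ) (hp : k + ℓ ≤ p) :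
    (q ^ (k + ℓ) * a + b) / q ^ p % q = a / q ^ (p - (k + ℓ)) % q := by
  have h1 : (q ^ (k + ℓ) * a + b) / q ^ (k + ℓ) = a := by
    rw [Nat.mul_add_div (pow_pos (by omega : 0 < q) _), mid_b hq hb _ (by omega)]
    omega
  have h2 : q ^ p = q ^ (k + ℓ) * q ^ (p - (k + ℓ)) := by
    rw [← pow_add]; congr 1; omega
  rw [h2, ← Nat.div_div_eq_div_mul, h1]

lemma dz_low {q k ℓ a b : ℕ} (hq : 2 ≤ q) {j : ℤ} (hjk : j < (k : ℤ) + ℓ) :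
    digitZ q (q ^ (k + ℓ) * a + b) j = digitZ q b j := by
  rcases lt_or_ge j 0 with h | h
  · simp [digitZ, not_le.mpr h]
  · rw [digitZ, digitZ, if_pos h, if_pos h]
    exact low_digit hq j.toNat (by omega)

lemma dz_high {q k ℓ a b : ℕ} (hq : 2 ≤ q) (hb : b < q ^ k) {j : ℤ} (hjk : (k : ℤ) ≤ j) :
    digitZ q (q ^ (k + ℓ) * a + b) j = digitZ q a (j - ((k : ℤ) + ℓ)) := by
  have h0 : (0 : ℤ) ≤ j := le_trans (by positivity) hjk
  rcases lt_or_ge j ((k : ℤ) + ℓ) with h | h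
  · rw [dz_low hq h, digitZ, digitZ, if_pos h0, if_neg (by omega),
      mid_b hq hb j.toNat (by omega)]
    exact Nat.zero_mod q
  · rw [digitZ, digitZ, if_pos h0, if_pos (by omega),
      high_digit hq hb j.toNat (by omega)]
    have : j.toNat - (k + ℓ) = (j - ((k : ℤ) + ℓ)).toNat := by omega
    rw [this]

end BlockCountAux

open BlockCountAux in
/-- If `B` is not the all-zero block, then the block count `c_B` is `q`-quasiadditive
with parameter `ℓ`. -/
theorem blockCount_quasiAdditive (q ℓ : ℕ) (hq : 2 ≤ q) (ε : Fin ℓ → ℕ)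
    (hlt : ∀ i, ε i < q) (hne : ∃ i, ε i ≠ 0) :
    ∀ a b k : ℕ, b < q ^ k →
      blockCount q ℓ ε (q ^ (k + ℓ) * a + b) = blockCount q ℓ ε a + blockCount q ℓ ε b := by
  intro a b k hb
  have ha : a < q ^ (a + 1) := by
    calc a < 2 ^ (a + 1) := by
            have := Nat.lt_two_pow_self (n := a)
            have : (2:ℕ) ^ a ≤ 2 ^ (a+1) := Nat.pow_le_pow_right (by omega) (by omega)
            omega
      _ ≤ q ^ (a + 1) := Nat.pow_le_pow_left hq _
  set P : ℕ → Set ℤ := fun n =>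
    {j : ℤ | ∀ i : Fin ℓ, digitZ q n (j + ((ℓ - 1 - (i : ℕ) : ℕ) : ℤ)) = ε i} with hP
  have hbc : ∀ n, blockCount q ℓ ε n = (P n).ncard := fun n => rfl
  have hci : ∀ i : Fin ℓ, ℓ - 1 - (i : ℕ) < ℓ := fun i => by have := i.2; omega
  have hkey : P (q ^ (k + ℓ) * a + b) = P b ∪ (fun j => j + ((k : ℤ) + ℓ)) '' P a := by
    ext j
    simp only [hP, Set.mem_setOf_eq, Set.mem_union, Set.mem_image]
    constructor
    · intro hj
      rcases lt_or_ge j (k : ℤ) with h | h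
      · left
        intro i
        have hji := hj i
        rwa [dz_low hq (by have := hci i; omega)] at hji
      · right
        refine ⟨j - ((k : ℤ) + ℓ), fun i => ?_, by ring⟩
        have hji := hj i
        rw [dz_high hq hb (by have := hci i; omega)] at hji
        rw [show j - ((k : ℤ) + ℓ) + ((ℓ - 1 - (i : ℕ) : ℕ) : ℤ)
            = j + ((ℓ - 1 - (i : ℕ) : ℕ) : ℤ) - ((k : ℤ) + ℓ) from by ring]
        exact hji
    · rintro (hj | ⟨j', hj', rfl⟩)
      · have hjk : j < (k : ℤ) := (occ_lt hq hne hb hj).1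
        intro i
        rw [dz_low hq (by have := hci i; omega)]
        exact hj i
      · have hj'lb : 1 - (ℓ : ℤ) ≤ j' := (occ_lt hq hne ha hj').2
        intro i
        rw [dz_high hq hb (by have := hci i; omega)]
        rw [show j' + ((k : ℤ) + ℓ) + ((ℓ - 1 - (i : ℕ) : ℕ) : ℤ) - ((k : ℤ) + ℓ)
            = j' + ((ℓ - 1 - (i : ℕ) : ℕ) : ℤ) from by ring]
        exact hj' i
  have hdisj : Disjoint (P b) ((fun j => j + ((k : ℤ) + ℓ)) '' P a) := by
    rw [Set.disjoint_left]
    rintro j hj ⟨j', hj', rfl⟩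
    have h1 : j' + ((k : ℤ) + ℓ) < (k : ℤ) := (occ_lt hq hne hb hj).1
    have h2 : 1 - (ℓ : ℤ) ≤ j' := (occ_lt hq hne ha hj').2
    omega
  rw [hbc, hbc, hbc, hkey,
    Set.ncard_union_eq hdisj (occ_finite hq hne b) ((occ_finite hq hne a).image _),
    Set.ncard_image_of_injective _ (add_left_injective _), add_comm]
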